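/- Let ε > 0, Δt ∈ (0,1], and let ρ, j : ℝ × ℝ → ℝ be solutions of the modified macroscopic system ∂t ρ + (ε²/(ε²+Δt)) ∂x j = (Δt/(ε²+Δt)) ∂xx ρ and ∂t j + (1/(ε²+Δt)) ∂x ρ = −(1/(ε²+Δt)) j + (Δt/(ε²+Δt)) ∂xx j, such that ρ and j are twice continuously differentiable in time with |∂tt ρ| ≤ M, |∂tt j| ≤ M, and ∂xx ρ and ∂xx j are continuously differentiable in time with |∂t ∂xx ρ| ≤ M, |∂t ∂xx j| ≤ M everywhere, for some constant M. Then for every (x, t), the residuals of the implicit-in-diffusion scheme satisfy |(ρ(x,t+Δt) − ρ(x,t))/Δt + (ε²/(ε²+Δt)) ∂x j(x,t) − (Δt/(ε²+Δt)) ∂xx ρ(x,t+Δt)| ≤ (3/2) M Δt and |(j(x,t+Δt) − j(x,t))/Δt + (1/(ε²+Δt)) ∂x ρ(x,t) + (1/(ε²+Δt)) j(x,t) − (Δt/(ε²+Δt)) ∂xx j(x,t+Δt)| ≤ (3/2) M Δt; that is, exact solutions of the modified system satisfy the time-discrete scheme up to first order in Δt. -/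

import Mathlib

open intervalIntegral Set

lemma lipBound (f : ℝ → ℝ) (M : ℝ) (hf : Differentiable ℝ f)
    (hM : ∀ s, |deriv f s| ≤ M) (a b : ℝ) : |f b - f a| ≤ M * |b - a| := by
  have := Convex.norm_image_sub_le_of_norm_deriv_le (s := Set.univ) (f := f) (C := M)
    (fun x _ => hf x) (fun x _ => hM x) convex_univ (Set.mem_univ a) (Set.mem_univ b)
  simpa [Real.norm_eq_abs] using this

lemma taylor1 (f : ℝ → ℝ) (M h : ℝ) (hf : ContDiff ℝ 2 f)
    (hM : ∀ s, |deriv (deriv f) s| ≤ M) (hh : 0 ≤ h) (t : ℝ) :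
    |f (t + h) - f t - deriv f t * h| ≤ M * h ^ 2 / 2 := by
  have hdf : Differentiable ℝ f := hf.differentiable (by norm_num)
  have hf2 : ContDiff ℝ 1 (deriv f) := by
    have := (contDiff_succ_iff_deriv (n := 1)).mp (by norm_num at hf ⊢; exact hf)
    exact this.2.2
  have hdf' : Differentiable ℝ (deriv f) := hf2.differentiable (by norm_num)
  have hint : ∫ s in t..(t + h), deriv f s = f (t + h) - f t :=
    integral_deriv_eq_sub (fun x _ => hdf x) (hf2.continuous.intervalIntegrable _ _)
  have hconst : ∫ _ in t..(t + h), deriv f t = deriv f t * h := by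
    simp [mul_comm]
  have key : f (t + h) - f t - deriv f t * h
      = ∫ s in t..(t + h), (deriv f s - deriv f t) := by
    rw [intervalIntegral.integral_sub (hf2.continuous.intervalIntegrable _ _)
      (intervalIntegrable_const), hint, hconst]
  rw [key]
  have hbd : ∀ s ∈ Set.uIoc t (t + h), |deriv f s - deriv f t| ≤ M * (s - t) := by
    intro s hs
    rw [Set.uIoc_of_le (by linarith)] at hs
    have h2 := lipBound (deriv f) M hdf' hM t s
    rwa [abs_of_nonneg (show (0:ℝ) ≤ s - t by linarith [hs.1])] at h2
  have hgint : IntervalIntegrable (fun s => M * (s - t)) MeasureTheory.volume t (t + h) :=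
    (Continuous.intervalIntegrable (by continuity) _ _)
  have := intervalIntegral.norm_integral_le_abs_of_norm_le (μ := MeasureTheory.volume)
    (f := fun s => deriv f s - deriv f t) (a := t) (b := t + h) (g := fun s => M * (s - t))
    (MeasureTheory.ae_restrict_of_forall_mem measurableSet_uIoc (fun s hs => by
      simpa [Real.norm_eq_abs] using hbd s hs)) hgint
  rw [Real.norm_eq_abs] at this
  refine this.trans (le_of_eq ?_)
  have : ∫ s in t..(t + h), M * (s - t) = M * h ^ 2 / 2 := by
    rw [intervalIntegral.integral_const_mul]
    rw [intervalIntegral.integral_sub (Continuous.intervalIntegrable (by continuity) _ _)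
      intervalIntegrable_const]
    simp [integral_id]
    ring
  have hM0 : 0 ≤ M := (abs_nonneg _).trans (hM t)
  rw [this, abs_of_nonneg (by positivity)]

lemma mainBound (Δt M b C : ℝ) (hΔt : 0 < Δt) (hb0 : 0 ≤ b) (hb1 : b ≤ 1)
    (f g : ℝ → ℝ) (t : ℝ) (hf : ContDiff ℝ 2 f) (hftt : ∀ s, |deriv (deriv f) s| ≤ M)
    (hg : ContDiff ℝ 1 g) (hg' : ∀ s, |deriv g s| ≤ M)
    (hC : C = b * g t - deriv f t) :
    |(f (t + Δt) - f t) / Δt + C - b * g (t + Δt)| ≤ 3 / 2 * M * Δt := by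
  have hM0 : 0 ≤ M := (abs_nonneg _).trans (hftt t)
  have hT := taylor1 f M Δt hf hftt hΔt.le t
  have hL := lipBound g M (hg.differentiable (by norm_num)) hg' t (t + Δt)
  have hL' : |g (t + Δt) - g t| ≤ M * Δt := by
    rwa [show t + Δt - t = Δt by ring, abs_of_pos hΔt] at hL
  have key : (f (t + Δt) - f t) / Δt + C - b * g (t + Δt)
      = (f (t + Δt) - f t - deriv f t * Δt) / Δt + b * (g t - g (t + Δt)) := by
    rw [hC]; field_simp; ring
  rw [key]
  have h1 : |(f (t + Δt) - f t - deriv f t * Δt) / Δt| ≤ M * Δt / 2 := by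
    rw [abs_div, abs_of_pos hΔt, div_le_iff₀ hΔt]
    nlinarith [hT]
  have h2 : |b * (g t - g (t + Δt))| ≤ M * Δt := by
    rw [abs_mul, abs_of_nonneg hb0, abs_sub_comm]
    calc b * |g (t + Δt) - g t| ≤ 1 * (M * Δt) :=
          mul_le_mul hb1 hL' (abs_nonneg _) zero_le_one
      _ = M * Δt := one_mul _
  calc |(f (t + Δt) - f t - deriv f t * Δt) / Δt + b * (g t - g (t + Δt))|
      ≤ |(f (t + Δt) - f t - deriv f t * Δt) / Δt| + |b * (g t - g (t + Δt))| := abs_add_le _ _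
    _ ≤ M * Δt / 2 + M * Δt := add_le_add h1 h2
    _ = 3 / 2 * M * Δt := by ring


/-- Partial derivative in time of a function `f : ℝ → ℝ → ℝ` (space, then time). -/
noncomputable def pt (f : ℝ → ℝ → ℝ) (x t : ℝ) : ℝ := deriv (fun s => f x s) t

/-- Partial derivative in space of a function `f : ℝ → ℝ → ℝ` (space, then time). -/
noncomputable def px (f : ℝ → ℝ → ℝ) (x t : ℝ) : ℝ := deriv (fun y => f y t) x

/-- Second partial derivative in time. -/
noncomputable def ptt (f : ℝ → ℝ → ℝ) (x t : ℝ) : ℝ :=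
  deriv (fun s => deriv (fun s' => f x s') s) t

/-- Second partial derivative in space. -/
noncomputable def pxx (f : ℝ → ℝ → ℝ) (x t : ℝ) : ℝ :=
  deriv (fun y => deriv (fun y' => f y' t) y) x

/-- Exact solutions of the modified macroscopic Goldstein–Taylor
system satisfy the implicit-in-diffusion time-discrete scheme up to first order
in `Δt`, with residuals bounded by `(3/2) M Δt`. -/
theorem stmt10 (ε Δt M : ℝ) (hε : 0 < ε) (hΔt : 0 < Δt) (hΔt1 : Δt ≤ 1)
    (ρ j : ℝ → ℝ → ℝ)
    (heq1 : ∀ x t, pt ρ x t + (ε ^ 2 / (ε ^ 2 + Δt)) * px j x t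
      = (Δt / (ε ^ 2 + Δt)) * pxx ρ x t)
    (heq2 : ∀ x t, pt j x t + (1 / (ε ^ 2 + Δt)) * px ρ x t
      = -(1 / (ε ^ 2 + Δt)) * j x t + (Δt / (ε ^ 2 + Δt)) * pxx j x t)
    (hρt : ∀ x, ContDiff ℝ 2 (fun t => ρ x t))
    (hjt : ∀ x, ContDiff ℝ 2 (fun t => j x t))
    (hρtt : ∀ x t, |ptt ρ x t| ≤ M)
    (hjtt : ∀ x t, |ptt j x t| ≤ M)
    (hρxxt : ∀ x, ContDiff ℝ 1 (fun t => pxx ρ x t))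
    (hjxxt : ∀ x, ContDiff ℝ 1 (fun t => pxx j x t))
    (hρxxt' : ∀ x t, |deriv (fun s => pxx ρ x s) t| ≤ M)
    (hjxxt' : ∀ x t, |deriv (fun s => pxx j x s) t| ≤ M) :
    ∀ x t,
      |(ρ x (t + Δt) - ρ x t) / Δt + (ε ^ 2 / (ε ^ 2 + Δt)) * px j x t
        - (Δt / (ε ^ 2 + Δt)) * pxx ρ x (t + Δt)| ≤ (3 / 2) * M * Δt ∧
      |(j x (t + Δt) - j x t) / Δt + (1 / (ε ^ 2 + Δt)) * px ρ x t
        + (1 / (ε ^ 2 + Δt)) * j x t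
        - (Δt / (ε ^ 2 + Δt)) * pxx j x (t + Δt)| ≤ (3 / 2) * M * Δt := by
  intro x t
  have hD : 0 < ε ^ 2 + Δt := by positivity
  have hble : Δt / (ε ^ 2 + Δt) ≤ 1 := by
    rw [div_le_one hD]; nlinarith [sq_nonneg ε]
  have hb0 : 0 ≤ Δt / (ε ^ 2 + Δt) := by positivity
  constructor
  · have h := mainBound Δt M (Δt / (ε ^ 2 + Δt)) ((ε ^ 2 / (ε ^ 2 + Δt)) * px j x t)
      hΔt hb0 hble (fun s => ρ x s) (fun s => pxx ρ x s) t (hρt x)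
      (fun s => by have := hρtt x s; simpa [ptt] using this)
      (hρxxt x) (hρxxt' x)
      (by have := heq1 x t; simp only [pt] at this; linarith)
    exact h
  · have h := mainBound Δt M (Δt / (ε ^ 2 + Δt))
      ((1 / (ε ^ 2 + Δt)) * px ρ x t + (1 / (ε ^ 2 + Δt)) * j x t)
      hΔt hb0 hble (fun s => j x s) (fun s => pxx j x s) t (hjt x)
      (fun s => by have := hjtt x s; simpa [ptt] using this)
      (hjxxt x) (hjxxt' x)
      (by have := heq2 x t; simp only [pt] at this; linarith)
    have e : (j x (t + Δt) - j x t) / Δt + (1 / (ε ^ 2 + Δt)) * px ρ x t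
        + (1 / (ε ^ 2 + Δt)) * j x t - (Δt / (ε ^ 2 + Δt)) * pxx j x (t + Δt)
        = (j x (t + Δt) - j x t) / Δt
          + ((1 / (ε ^ 2 + Δt)) * px ρ x t + (1 / (ε ^ 2 + Δt)) * j x t)
          - (Δt / (ε ^ 2 + Δt)) * pxx j x (t + Δt) := by ring
    rw [e]
    exact h
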